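/- Let (X,d) be a metric space and K a nonempty subset of X. Let A and T be selfmaps of K. Suppose there exist a function ψ satisfying Condition-A and a function φ ∈ Φ such that for all x, y ∈ K: ψ(d(Tx,Ty), d(Tx,Ty)) ≤ φ(max{ψ(d(Ax,Ay), d(Ax,Tx)), ψ(d(Ax,Ay), d(Ay,Ty)), ψ(d(Ax,Tx), d(Ay,Ty)), ψ(d(Ay,Ty), d(Ax,Tx)), min{ψ(d(Ay,Tx), d(Ax,Tx)), ψ(d(Ax,Ty), d(Ay,Ty))}, min{ψ(d(Ay,Tx), d(Ay,Ty)), ψ(d(Ax,Ty), d(Ax,Tx))}}). Assume the pair (A,T) is weakly compatible and the closure of T(K) is contained in A(K). If either T(K) or A(K) is complete, then A and T have a unique common fixed point. -/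

import Mathlib

open Set Filter Topology
open scoped NNReal

/-- A two-variable auxiliary function satisfying Condition-A. -/
def ConditionA (ψ : ℝ≥0 → ℝ≥0 → ℝ≥0) : Prop :=
  Continuous (Function.uncurry ψ) ∧
  (∀ t, Monotone fun s => ψ s t) ∧
  (∀ s, Monotone fun t => ψ s t) ∧
  ψ 0 0 = 0 ∧
  ∀ t, ψ t 0 = 0 → t = 0

/-- `φ ∈ Φ`: monotonically increasing, continuous, `0 < φ(t) < t` for `t > 0`. -/
def InPhi (φ : ℝ≥0 → ℝ≥0) : Prop :=
  Monotone φ ∧ Continuous φ ∧ ∀ t, 0 < t → 0 < φ t ∧ φ t < t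

section Aux

variable {ψ : ℝ≥0 → ℝ≥0 → ℝ≥0} {φ : ℝ≥0 → ℝ≥0}

lemma psi_mono2 (hψ : ConditionA ψ) {a a' b b' : ℝ≥0} (ha : a ≤ a') (hb : b ≤ b') :
    ψ a b ≤ ψ a' b' := by
  calc ψ a b ≤ ψ a' b := hψ.2.1 b ha
    _ ≤ ψ a' b' := hψ.2.2.1 a' hb

lemma psi_diag_zero (hψ : ConditionA ψ) {t : ℝ≥0} (h : ψ t t = 0) : t = 0 := by
  apply hψ.2.2.2.2 t
  have h1 : ψ t 0 ≤ ψ t t := hψ.2.2.1 t zero_le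
  rw [h] at h1
  exact le_antisymm h1 zero_le

lemma phi_fix (hφ : InPhi φ) {t : ℝ≥0} (h : t ≤ φ t) : t = 0 := by
  by_contra ht
  exact absurd (h.trans_lt (hφ.2.2 t (pos_iff_ne_zero.mpr ht)).2) (lt_irrefl t)

end Aux

theorem stmt_2 {X : Type*} [MetricSpace X] (K : Set X) (hK : K.Nonempty)
    (A T : X → X)
    (hA : MapsTo A K K) (hT : MapsTo T K K)
    (ψ : ℝ≥0 → ℝ≥0 → ℝ≥0) (hψ : ConditionA ψ)
    (φ : ℝ≥0 → ℝ≥0) (hφ : InPhi φ)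
    (hcontr : ∀ x ∈ K, ∀ y ∈ K,
      ψ (nndist (T x) (T y)) (nndist (T x) (T y)) ≤
        φ (max (ψ (nndist (A x) (A y)) (nndist (A x) (T x)))
          (max (ψ (nndist (A x) (A y)) (nndist (A y) (T y)))
          (max (ψ (nndist (A x) (T x)) (nndist (A y) (T y)))
          (max (ψ (nndist (A y) (T y)) (nndist (A x) (T x)))
          (max (min (ψ (nndist (A y) (T x)) (nndist (A x) (T x)))
                    (ψ (nndist (A x) (T y)) (nndist (A y) (T y))))
               (min (ψ (nndist (A y) (T x)) (nndist (A y) (T y)))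
                    (ψ (nndist (A x) (T y)) (nndist (A x) (T x))))))))))
    (hAT : ∀ x ∈ K, A x = T x → A (T x) = T (A x))
    (hTA : closure (T '' K) ⊆ A '' K)
    (hcomp : IsComplete (T '' K) ∨ IsComplete (A '' K)) :
    ∃! z, z ∈ K ∧ A z = z ∧ T z = z := by
  classical
  obtain ⟨x₀, hx₀⟩ := hK
  -- a coincidence-point lemma: coincidence values agree
  have coinc : ∀ a ∈ K, ∀ b ∈ K, A a = T a → A b = T b → T a = T b := by
    intro a ha b hb h1 h2
    have h := hcontr a ha b hb
    rw [h1, h2] at h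
    set c : ℝ≥0 := nndist (T a) (T b) with hc
    have hcc : nndist (T b) (T a) = c := nndist_comm _ _
    have hself : ∀ p : X, nndist p p ≤ c := fun p => by simp [nndist_self]
    have hB : ∀ {u v : ℝ≥0}, u ≤ c → v ≤ c → ψ u v ≤ ψ c c := fun hu hv => psi_mono2 hψ hu hv
    have hmax : max (ψ (nndist (T a) (T b)) (nndist (T a) (T a)))
          (max (ψ (nndist (T a) (T b)) (nndist (T b) (T b)))
          (max (ψ (nndist (T a) (T a)) (nndist (T b) (T b)))
          (max (ψ (nndist (T b) (T b)) (nndist (T a) (T a)))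
          (max (min (ψ (nndist (T b) (T a)) (nndist (T a) (T a)))
                    (ψ (nndist (T a) (T b)) (nndist (T b) (T b))))
               (min (ψ (nndist (T b) (T a)) (nndist (T b) (T b)))
                    (ψ (nndist (T a) (T b)) (nndist (T a) (T a)))))))) ≤ ψ c c := by
      refine max_le (hB le_rfl (hself _)) (max_le (hB le_rfl (hself _))
        (max_le (hB (hself _) (hself _)) (max_le (hB (hself _) (hself _))
        (max_le ((min_le_left _ _).trans (hB hcc.le (hself _)))
          ((min_le_left _ _).trans (hB hcc.le (hself _)))))))
    have h' : ψ c c ≤ φ (ψ c c) := h.trans ((hφ.1 hmax))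
    have : c = 0 := psi_diag_zero hψ (phi_fix hφ h')
    exact nndist_eq_zero.mp (hc ▸ this)
  -- build the iteration sequence
  have hsur : ∀ p ∈ K, ∃ q, q ∈ K ∧ A q = T p := by
    intro p hp
    obtain ⟨q, hq, hAq⟩ := hTA (subset_closure ⟨p, hp, rfl⟩)
    exact ⟨q, hq, hAq⟩
  choose g hgK hgA using fun p : {p // p ∈ K} => hsur p.1 p.2
  let G : {p // p ∈ K} → {p // p ∈ K} := fun p => ⟨g p, hgK p⟩
  let xs : ℕ → {p // p ∈ K} := fun n => G^[n] ⟨x₀, hx₀⟩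
  have hxs : ∀ n, xs (n + 1) = G (xs n) := fun n => Function.iterate_succ_apply' G n _
  let x : ℕ → X := fun n => (xs n).1
  have hxK : ∀ n, x n ∈ K := fun n => (xs n).2
  have hx : ∀ n, A (x (n + 1)) = T (x n) := by
    intro n
    have h1 : x (n + 1) = g (xs n) := congrArg Subtype.val (hxs n)
    rw [h1]
    exact hgA (xs n)
  -- distances between consecutive T-iterates
  let d : ℕ → ℝ≥0 := fun n => nndist (T (x n)) (T (x (n + 1)))
  -- utility: ψ tendsto
  have psiT : ∀ {f g : ℕ → ℝ≥0} {a b : ℝ≥0}, Tendsto f atTop (𝓝 a) → Tendsto g atTop (𝓝 b) →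
      Tendsto (fun n => ψ (f n) (g n)) atTop (𝓝 (ψ a b)) := by
    intro f g a b hf hg
    exact (hψ.1.tendsto (a, b)).comp (hf.prodMk_nhds hg)
  -- step inequality
  have step : ∀ n, ψ (d (n + 1)) (d (n + 1)) ≤
      φ (ψ (max (d n) (d (n + 1))) (max (d n) (d (n + 1)))) := by
    intro n
    have h := hcontr (x (n + 1)) (hxK (n + 1)) (x (n + 2)) (hxK (n + 2))
    rw [hx n, hx (n + 1)] at h
    refine h.trans (hφ.1 ?_)
    set M := max (d n) (d (n + 1)) with hM
    have h1 : d n ≤ M := le_max_left _ _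
    have h2 : d (n + 1) ≤ M := le_max_right _ _
    have hself : nndist (T (x (n + 1))) (T (x (n + 1))) ≤ M := by simp [nndist_self]
    refine max_le (psi_mono2 hψ h1 h1) (max_le (psi_mono2 hψ h1 h2)
      (max_le (psi_mono2 hψ h1 h2) (max_le (psi_mono2 hψ h2 h1)
      (max_le ((min_le_left _ _).trans (psi_mono2 hψ hself h1))
        ((min_le_left _ _).trans (psi_mono2 hψ hself h2))))))
  -- d is antitone
  have hanti : ∀ n, d (n + 1) ≤ d n := by
    intro n
    by_contra hlt
    push_neg at hlt
    have hM : max (d n) (d (n + 1)) = d (n + 1) := max_eq_right hlt.le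
    have h := step n
    rw [hM] at h
    have h0 : d (n + 1) = 0 := psi_diag_zero hψ (phi_fix hφ h)
    rw [h0] at hlt
    exact absurd hlt (not_lt.mpr zero_le)
  have hanti' : Antitone d := antitone_nat_of_succ_le hanti
  have hstep2 : ∀ n, ψ (d (n + 1)) (d (n + 1)) ≤ φ (ψ (d n) (d n)) := by
    intro n
    have h := step n
    rwa [max_eq_left (hanti n)] at h
  -- d tends to 0
  have hd0 : Tendsto d atTop (𝓝 0) := by
    have hdlim : Tendsto d atTop (𝓝 (⨅ n, d n)) :=
      tendsto_atTop_ciInf hanti' (OrderBot.bddBelow _)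
    have hρ : Tendsto (fun n => ψ (d n) (d n)) atTop (𝓝 (ψ (⨅ n, d n) (⨅ n, d n))) :=
      psiT hdlim hdlim
    have hρ' : Tendsto (fun n => ψ (d (n + 1)) (d (n + 1))) atTop
        (𝓝 (ψ (⨅ n, d n) (⨅ n, d n))) := hρ.comp (tendsto_add_atTop_nat 1)
    have hφρ : Tendsto (fun n => φ (ψ (d n) (d n))) atTop (𝓝 (φ (ψ (⨅ n, d n) (⨅ n, d n)))) :=
      (hφ.2.1.tendsto _).comp hρ
    have hle : ψ (⨅ n, d n) (⨅ n, d n) ≤ φ (ψ (⨅ n, d n) (⨅ n, d n)) :=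
      le_of_tendsto_of_tendsto' hρ' hφρ hstep2
    have : (⨅ n, d n) = 0 := psi_diag_zero hψ (phi_fix hφ hle)
    rwa [this] at hdlim
  -- master inequality
  have master : ∀ m n, ψ (nndist (T (x (m + 1))) (T (x (n + 1))))
      (nndist (T (x (m + 1))) (T (x (n + 1)))) ≤
      φ (ψ (nndist (T (x m)) (T (x n)) + (d m + d n)) (d m + d n)) := by
    intro m n
    have h := hcontr (x (m + 1)) (hxK (m + 1)) (x (n + 1)) (hxK (n + 1))
    rw [hx m, hx n] at h
    refine h.trans (hφ.1 ?_)
    set D := nndist (T (x m)) (T (x n)) with hD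
    set s := d m + d n with hs
    have hdm : d m ≤ s := le_self_add
    have hdn : d n ≤ s := le_add_self
    have hDs : D ≤ D + s := le_self_add
    have hdmDs : d m ≤ D + s := hdm.trans (self_le_add_left _ _)
    have hdnDs : d n ≤ D + s := hdn.trans (self_le_add_left _ _)
    have ht5 : nndist (T (x n)) (T (x (m + 1))) ≤ D + s := by
      calc nndist (T (x n)) (T (x (m + 1)))
          ≤ nndist (T (x n)) (T (x m)) + nndist (T (x m)) (T (x (m + 1))) :=
            nndist_triangle _ _ _
        _ = D + d m := by rw [nndist_comm]
        _ ≤ D + s := add_le_add le_rfl hdm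
    have ht6 : nndist (T (x m)) (T (x (n + 1))) ≤ D + s := by
      calc nndist (T (x m)) (T (x (n + 1)))
          ≤ nndist (T (x m)) (T (x n)) + nndist (T (x n)) (T (x (n + 1))) :=
            nndist_triangle _ _ _
        _ = D + d n := rfl
        _ ≤ D + s := add_le_add le_rfl hdn
    refine max_le (psi_mono2 hψ hDs hdm) (max_le (psi_mono2 hψ hDs hdn)
      (max_le (psi_mono2 hψ hdmDs hdn) (max_le (psi_mono2 hψ hdnDs hdm)
      (max_le ((min_le_left _ _).trans (psi_mono2 hψ ht5 hdm))
        ((min_le_left _ _).trans (psi_mono2 hψ ht5 hdn))))))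
  -- the sequence (T (x n)) is Cauchy
  have hcauchy : CauchySeq (fun n => T (x n)) := by
    by_contra hnc
    rw [Metric.cauchySeq_iff] at hnc
    push_neg at hnc
    obtain ⟨ε, hε, hno⟩ := hnc
    set ε' : ℝ≥0 := ⟨ε, hε.le⟩ with hε'
    have hε'pos : ε' ≠ 0 := by
      intro h
      have : ε = 0 := congrArg NNReal.toReal h
      exact hε.ne' this
    -- for each k we get p ≥ k and j > p with ε' ≤ nndist …
    have key : ∀ k : ℕ, ∃ p, k ≤ p ∧ ∃ j, p < j ∧ ε' ≤ nndist (T (x p)) (T (x j)) := by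
      intro k
      obtain ⟨m, hm, n, hn, hdist⟩ := hno k
      have hdist' : ε' ≤ nndist (T (x m)) (T (x n)) := by
        rw [← NNReal.coe_le_coe, coe_nndist]
        exact hdist
      rcases lt_trichotomy m n with hmn | hmn | hmn
      · exact ⟨m, hm, n, hmn, hdist'⟩
      · exfalso
        rw [hmn, nndist_self] at hdist'
        exact hε'pos (le_antisymm hdist' zero_le)
      · exact ⟨n, hn, m, hmn, by rwa [nndist_comm]⟩
    choose p hp j hj hdj using key
    -- minimal index beyond p k with distance ≥ ε'
    have hex : ∀ k, ∃ j, p k < j ∧ ε' ≤ nndist (T (x (p k))) (T (x j)) :=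
      fun k => ⟨j k, hj k, hdj k⟩
    let N : ℕ → ℕ := fun k => Nat.find (hex k)
    have hNspec : ∀ k, p k < N k ∧ ε' ≤ nndist (T (x (p k))) (T (x (N k))) :=
      fun k => Nat.find_spec (hex k)
    have hNmin : ∀ k, ∀ i < N k, ¬(p k < i ∧ ε' ≤ nndist (T (x (p k))) (T (x i))) :=
      fun k => fun i hi => Nat.find_min (hex k) hi
    -- D k ≤ ε' + d k
    set D : ℕ → ℝ≥0 := fun k => nndist (T (x (p k))) (T (x (N k)))
    have hDlow : ∀ k, ε' ≤ D k := fun k => (hNspec k).2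
    have hDup : ∀ k, D k ≤ ε' + d k := by
      intro k
      rcases Nat.lt_or_ge (p k + 1) (N k) with hcase | hcase
      · -- N k - 1 > p k
        have hN1 : N k - 1 < N k := by omega
        have hplt : p k < N k - 1 := by omega
        have hsmall : ¬ (ε' ≤ nndist (T (x (p k))) (T (x (N k - 1)))) := by
          intro hcon
          exact hNmin k _ hN1 ⟨hplt, hcon⟩
        push_neg at hsmall
        have hd1 : nndist (T (x (N k - 1))) (T (x (N k))) = d (N k - 1) := by
          have hh : N k - 1 + 1 = N k := by omega
          show _ = nndist (T (x (N k - 1))) (T (x (N k - 1 + 1)))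
          rw [hh]
        have htr : D k ≤ nndist (T (x (p k))) (T (x (N k - 1))) + d (N k - 1) := by
          calc D k ≤ nndist (T (x (p k))) (T (x (N k - 1)))
                + nndist (T (x (N k - 1))) (T (x (N k))) := nndist_triangle _ _ _
            _ = nndist (T (x (p k))) (T (x (N k - 1))) + d (N k - 1) := by rw [hd1]
        have hdk : d (N k - 1) ≤ d k := hanti' (le_trans (hp k) (by omega))
        calc D k ≤ nndist (T (x (p k))) (T (x (N k - 1))) + d (N k - 1) := htr
          _ ≤ ε' + d k := add_le_add hsmall.le hdk
      · -- N k = p k + 1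
        have hNk : N k = p k + 1 := le_antisymm hcase (hNspec k).1
        have : D k = d (p k) := by
          show nndist (T (x (p k))) (T (x (N k))) = nndist (T (x (p k))) (T (x (p k + 1)))
          rw [hNk]
        rw [this]
        exact le_trans (hanti' (hp k)) (self_le_add_left _ _)
    -- limits
    have hdp : Tendsto (fun k => d (p k)) atTop (𝓝 0) := by
      refine tendsto_of_tendsto_of_tendsto_of_le_of_le tendsto_const_nhds hd0
        (fun k => zero_le) (fun k => hanti' (hp k))
    have hdN : Tendsto (fun k => d (N k)) atTop (𝓝 0) := by
      refine tendsto_of_tendsto_of_tendsto_of_le_of_le tendsto_const_nhds hd0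
        (fun k => zero_le) (fun k => hanti' (le_trans (hp k) (hNspec k).1.le))
    have hs0 : Tendsto (fun k => d (p k) + d (N k)) atTop (𝓝 0) := by
      have := hdp.add hdN
      simpa using this
    have hDlim : Tendsto D atTop (𝓝 ε') := by
      refine tendsto_of_tendsto_of_tendsto_of_le_of_le tendsto_const_nhds ?_ hDlow hDup
      have := (tendsto_const_nhds : Tendsto (fun _ : ℕ => ε') atTop (𝓝 ε')).add hd0
      simpa using this
    -- E k = nndist (T (x (p k + 1))) (T (x (N k + 1)))
    set E : ℕ → ℝ≥0 := fun k => nndist (T (x (p k + 1))) (T (x (N k + 1)))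
    have hElow : ∀ k, D k - (d (p k) + d (N k)) ≤ E k := by
      intro k
      rw [tsub_le_iff_right]
      calc D k ≤ nndist (T (x (p k))) (T (x (p k + 1))) + nndist (T (x (p k + 1))) (T (x (N k))) :=
            nndist_triangle _ _ _
        _ ≤ d (p k) + (E k + nndist (T (x (N k + 1))) (T (x (N k)))) :=
            add_le_add le_rfl (nndist_triangle _ _ _)
        _ = d (p k) + (E k + d (N k)) := by rw [nndist_comm (T (x (N k + 1)))]
        _ = E k + (d (p k) + d (N k)) := by ring
    have hEup : ∀ k, E k ≤ D k + (d (p k) + d (N k)) := by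
      intro k
      calc E k ≤ nndist (T (x (p k + 1))) (T (x (p k))) + nndist (T (x (p k))) (T (x (N k + 1))) :=
            nndist_triangle _ _ _
        _ ≤ nndist (T (x (p k + 1))) (T (x (p k))) + (D k + d (N k)) :=
            add_le_add le_rfl (nndist_triangle _ _ _)
        _ = d (p k) + (D k + d (N k)) := by rw [nndist_comm (T (x (p k + 1)))]
        _ = D k + (d (p k) + d (N k)) := by ring
    have hElim : Tendsto E atTop (𝓝 ε') := by
      refine tendsto_of_tendsto_of_tendsto_of_le_of_le ?_ ?_ hElow hEup
      · have := hDlim.sub hs0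
        simpa using this
      · have := hDlim.add hs0
        simpa using this
    -- apply master and take limits
    have hmaster' : ∀ k, ψ (E k) (E k) ≤
        φ (ψ (D k + (d (p k) + d (N k))) (d (p k) + d (N k))) := fun k => master (p k) (N k)
    have hL : Tendsto (fun k => ψ (E k) (E k)) atTop (𝓝 (ψ ε' ε')) := psiT hElim hElim
    have hR : Tendsto (fun k => φ (ψ (D k + (d (p k) + d (N k))) (d (p k) + d (N k))))
        atTop (𝓝 (φ (ψ (ε' + 0) 0))) := by
      exact (hφ.2.1.tendsto _).comp (psiT (hDlim.add hs0) hs0)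
    have hle : ψ ε' ε' ≤ φ (ψ (ε' + 0) 0) := le_of_tendsto_of_tendsto' hL hR hmaster'
    rw [add_zero] at hle
    have hle2 : ψ ε' ε' ≤ φ (ψ ε' ε') :=
      hle.trans (hφ.1 (hψ.2.2.1 ε' zero_le))
    exact hε'pos (psi_diag_zero hψ (phi_fix hφ hle2))
  -- limit point
  have hyT : ∀ n, T (x n) ∈ T '' K := fun n => ⟨x n, hxK n, rfl⟩
  have hyA : ∀ n, T (x n) ∈ A '' K := fun n => ⟨x (n + 1), hxK (n + 1), hx n⟩
  obtain ⟨z, hzA, hz⟩ : ∃ z ∈ A '' K, Tendsto (fun n => T (x n)) atTop (𝓝 z) := by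
    rcases hcomp with hc | hc
    · obtain ⟨z, hzT, hz⟩ := cauchySeq_tendsto_of_isComplete hc hyT hcauchy
      exact ⟨z, hTA (subset_closure hzT), hz⟩
    · exact cauchySeq_tendsto_of_isComplete hc hyA hcauchy
  obtain ⟨u, hu, hAu⟩ := hzA
  -- convergence facts
  have hyz : Tendsto (fun n => nndist (T (x n)) z) atTop (𝓝 0) := by
    have hc : Continuous fun q : X => nndist q z := continuous_id.nndist continuous_const
    have := (hc.tendsto z).comp hz
    simpa [Function.comp_def] using this
  have hyz' : Tendsto (fun n => nndist (T (x (n + 1))) z) atTop (𝓝 0) :=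
    hyz.comp (tendsto_add_atTop_nat 1)
  -- A u = T u
  have hATu : T u = z := by
    set c : ℝ≥0 := nndist z (T u) with hc
    set e : ℕ → ℝ≥0 := fun n => nndist (T (x n)) z + d n + nndist (T (x (n + 1))) z with he
    have he0 : Tendsto e atTop (𝓝 0) := by
      have := (hyz.add hd0).add hyz'
      simpa using this
    have hbound : ∀ n, ψ (nndist (T (x (n + 1))) (T u)) (nndist (T (x (n + 1))) (T u)) ≤
        φ (ψ (c + e n) (c + e n)) := by
      intro n
      have h := hcontr (x (n + 1)) (hxK (n + 1)) u hu
      rw [hx n, hAu] at h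
      refine h.trans (hφ.1 ?_)
      have h1 : nndist (T (x n)) z ≤ c + e n :=
        le_trans (le_add_right le_self_add) (self_le_add_left _ _)
      have h2 : nndist (T (x n)) (T (x (n + 1))) ≤ c + e n := by
        refine le_trans ?_ (self_le_add_left (e n) c)
        exact le_add_right (self_le_add_left _ _)
      have h3 : c ≤ c + e n := le_self_add
      have h4 : nndist z (T (x (n + 1))) ≤ c + e n := by
        rw [nndist_comm]
        exact le_trans (self_le_add_left _ _) (self_le_add_left _ _)
      have h5 : nndist (T (x n)) (T u) ≤ c + e n := by
        calc nndist (T (x n)) (T u) ≤ nndist (T (x n)) z + nndist z (T u) :=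
              nndist_triangle _ _ _
          _ = nndist z (T u) + nndist (T (x n)) z := add_comm _ _
          _ ≤ c + e n := add_le_add le_rfl (le_add_right le_self_add)
      refine max_le (psi_mono2 hψ h1 h2) (max_le (psi_mono2 hψ h1 h3)
        (max_le (psi_mono2 hψ h2 h3) (max_le (psi_mono2 hψ h3 h2)
        (max_le ((min_le_left _ _).trans (psi_mono2 hψ h4 h2))
          ((min_le_left _ _).trans (psi_mono2 hψ h4 h3))))))
    have hLlim : Tendsto (fun n => nndist (T (x (n + 1))) (T u)) atTop (𝓝 c) := by
      have hc' : Continuous fun q : X => nndist q (T u) := continuous_id.nndist continuous_const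
      exact (hc'.tendsto z).comp (hz.comp (tendsto_add_atTop_nat 1))
    have hL : Tendsto (fun n => ψ (nndist (T (x (n + 1))) (T u)) (nndist (T (x (n + 1))) (T u)))
        atTop (𝓝 (ψ c c)) := psiT hLlim hLlim
    have hce : Tendsto (fun n => c + e n) atTop (𝓝 c) := by
      have := (tendsto_const_nhds : Tendsto (fun _ : ℕ => c) atTop (𝓝 c)).add he0
      simpa using this
    have hR : Tendsto (fun n => φ (ψ (c + e n) (c + e n))) atTop (𝓝 (φ (ψ c c))) :=
      (hφ.2.1.tendsto _).comp (psiT hce hce)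
    have hle : ψ c c ≤ φ (ψ c c) := le_of_tendsto_of_tendsto' hL hR hbound
    have : c = 0 := psi_diag_zero hψ (phi_fix hφ hle)
    have := nndist_eq_zero.mp (hc ▸ this)
    exact this.symm
  -- conclude
  have hcu : A u = T u := by rw [hAu, hATu]
  have hzK : z ∈ K := hATu ▸ hT hu
  have hAzTz : A z = T z := by
    have := hAT u hu hcu
    rwa [hATu, hAu] at this
  have hTz : T z = z := by
    have := coinc u hu z hzK hcu hAzTz
    rw [hATu] at this
    exact this.symm
  have hAz : A z = z := by rw [hAzTz, hTz]
  refine ⟨z, ⟨hzK, hAz, hTz⟩, ?_⟩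
  rintro w ⟨hwK, hAw, hTw⟩
  have := coinc w hwK z hzK (by rw [hAw, hTw]) (by rw [hAz, hTz])
  rw [hTw, hTz] at this
  exact this
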